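/- For all n ≥ 1 and 1 ≤ i ≤ n, the number of permutations of [n] avoiding both 1324 and 1342 and starting with the letter i equals S_{n,i}. -/

import Mathlib

/-- `π` contains the pattern `p` (given as the sequence of its values). -/
def ContainsPat {n k : ℕ} (π : Equiv.Perm (Fin n)) (p : Fin k → ℕ) : Prop :=
  ∃ f : Fin k → Fin n, StrictMono f ∧ ∀ a b : Fin k, p a < p b ↔ π (f a) < π (f b)

/-- The first letter of `π` (in one-line notation, with values in `[n] = {1,…,n}`) is `i`. -/
def FirstIs {n : ℕ} (π : Equiv.Perm (Fin n)) (i : ℕ) : Prop :=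
  ∀ j : Fin n, (j : ℕ) = 0 → (π j : ℕ) + 1 = i


namespace SchAux

/-- `π` has a "bad" quadruple: an occurrence of 1324 or 1342. -/
def Bad {m : ℕ} (σ : Equiv.Perm (Fin m)) : Prop :=
  ∃ a b c d : Fin m, a.1 < b.1 ∧ b.1 < c.1 ∧ c.1 < d.1 ∧
    (σ a).1 < (σ c).1 ∧ (σ a).1 < (σ d).1 ∧
    (((σ c).1 < (σ b).1 ∧ (σ b).1 < (σ d).1) ∨ ((σ d).1 < (σ b).1 ∧ (σ b).1 < (σ c).1))

/-- triple b<c<d with values at c,d at least `t` and value at b strictly between. -/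
def BigT {m : ℕ} (σ : Equiv.Perm (Fin m)) (t : ℕ) : Prop :=
  ∃ b c d : Fin m, b.1 < c.1 ∧ c.1 < d.1 ∧
    t ≤ (σ c).1 ∧ t ≤ (σ d).1 ∧
    (((σ c).1 < (σ b).1 ∧ (σ b).1 < (σ d).1) ∨ ((σ d).1 < (σ b).1 ∧ (σ b).1 < (σ c).1))

noncomputable def F (m i : ℕ) : ℕ :=
  Nat.card {σ : Equiv.Perm (Fin m) // ¬ Bad σ ∧ ∀ j : Fin m, j.1 = 0 → (σ j).1 + 1 = i}

noncomputable def G (m c : ℕ) : ℕ :=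
  Nat.card {σ : Equiv.Perm (Fin m) // ¬ Bad σ ∧ ¬ BigT σ c}

noncomputable def T (m : ℕ) : ℕ := Nat.card {σ : Equiv.Perm (Fin m) // ¬ Bad σ}

noncomputable def Pl (m k : ℕ) : ℕ :=
  Nat.card {σ : Equiv.Perm (Fin m) // ¬ Bad σ ∧ ∀ j : Fin m, j.1 = 0 → (σ j).1 + 1 ≤ k}

variable {m : ℕ}

lemma val_ne {m : ℕ} (π : Equiv.Perm (Fin m)) {x y : Fin m} (h : x ≠ y) :
    (π x).1 ≠ (π y).1 := fun hv => h (π.injective (Fin.ext hv))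

section Std

def stdN (c v : ℕ) : ℕ := if v < c then v else v - 1

def fwdFun (π : Equiv.Perm (Fin (m+1))) (c : ℕ) (hc : c ≤ m)
    (h0 : (π ⟨0, Nat.succ_pos m⟩).1 = c) (j : Fin m) : Fin m :=
  ⟨stdN c (π ⟨j.1+1, by omega⟩).1, by
    have hne : (π ⟨j.1+1, by omega⟩).1 ≠ c := by
      rw [← h0]
      exact val_ne π (by simp [Fin.ext_iff])
    have hlt : (π ⟨j.1+1, by omega⟩).1 < m + 1 := (π _).2
    unfold stdN; split <;> omega⟩

lemma fwdFun_spec (π : Equiv.Perm (Fin (m+1))) (c : ℕ) (hc : c ≤ m)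
    (h0 : (π ⟨0, Nat.succ_pos m⟩).1 = c) (j : Fin m) (jl : Fin (m+1)) (hj : jl.1 = j.1 + 1) :
    ((π jl).1 < c ∧ (fwdFun π c hc h0 j).1 = (π jl).1) ∨
    (c < (π jl).1 ∧ (fwdFun π c hc h0 j).1 = (π jl).1 - 1) := by
  have hjl : jl = ⟨j.1+1, by omega⟩ := Fin.ext hj
  rw [hjl]
  have hne : (π ⟨j.1+1, by omega⟩).1 ≠ c := by
    rw [← h0]; exact val_ne π (by simp [Fin.ext_iff])
  unfold fwdFun stdN
  simp only
  split
  · exact Or.inl ⟨by omega, rfl⟩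
  · have hlt : (π ⟨j.1+1, by omega⟩).1 < m + 1 := (π _).2
    exact Or.inr ⟨by omega, rfl⟩

noncomputable def fwd (π : Equiv.Perm (Fin (m+1))) (c : ℕ) (hc : c ≤ m)
    (h0 : (π ⟨0, Nat.succ_pos m⟩).1 = c) : Equiv.Perm (Fin m) :=
  Equiv.ofBijective (fwdFun π c hc h0) (Finite.injective_iff_bijective.mp (by
    intro x y hxy
    have hx := fwdFun_spec π c hc h0 x ⟨x.1+1, by omega⟩ rfl
    have hy := fwdFun_spec π c hc h0 y ⟨y.1+1, by omega⟩ rfl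
    rw [hxy] at hx
    have hval : (π ⟨x.1+1, by omega⟩).1 = (π ⟨y.1+1, by omega⟩).1 := by omega
    have := π.injective (Fin.ext hval)
    simp only [Fin.mk.injEq] at this
    exact Fin.ext (by omega)))

lemma fwd_spec (π : Equiv.Perm (Fin (m+1))) (c : ℕ) (hc : c ≤ m)
    (h0 : (π ⟨0, Nat.succ_pos m⟩).1 = c) (j : Fin m) (jl : Fin (m+1)) (hj : jl.1 = j.1 + 1) :
    ((π jl).1 < c ∧ ((fwd π c hc h0) j).1 = (π jl).1) ∨
    (c < (π jl).1 ∧ ((fwd π c hc h0) j).1 = (π jl).1 - 1) :=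
  fwdFun_spec π c hc h0 j jl hj

def unstdN (c w : ℕ) : ℕ := if w < c then w else w + 1

def backFun (σ : Equiv.Perm (Fin m)) (c : ℕ) (hc : c ≤ m) (k : Fin (m+1)) : Fin (m+1) :=
  if hk : k.1 = 0 then ⟨c, by omega⟩
  else ⟨unstdN c (σ ⟨k.1-1, by omega⟩).1, by
    have := (σ ⟨k.1-1, by omega⟩).2
    unfold unstdN; split <;> omega⟩

lemma backFun_zero (σ : Equiv.Perm (Fin m)) (c : ℕ) (hc : c ≤ m) (k : Fin (m+1)) (hk : k.1 = 0) :
    (backFun σ c hc k).1 = c := by unfold backFun; rw [dif_pos hk]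

lemma backFun_succ (σ : Equiv.Perm (Fin m)) (c : ℕ) (hc : c ≤ m) (k : Fin (m+1))
    (hk : k.1 ≠ 0) (j : Fin m) (hj : j.1 = k.1 - 1) :
    ((σ j).1 < c ∧ (backFun σ c hc k).1 = (σ j).1) ∨
    (c ≤ (σ j).1 ∧ (backFun σ c hc k).1 = (σ j).1 + 1) := by
  have hj' : j = ⟨k.1-1, by omega⟩ := Fin.ext hj
  rw [hj']
  unfold backFun
  rw [dif_neg hk]
  unfold unstdN
  split
  · exact Or.inl ⟨by omega, rfl⟩
  · exact Or.inr ⟨by omega, rfl⟩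

noncomputable def back (σ : Equiv.Perm (Fin m)) (c : ℕ) (hc : c ≤ m) : Equiv.Perm (Fin (m+1)) :=
  Equiv.ofBijective (backFun σ c hc) (Finite.injective_iff_bijective.mp (by
    intro x y hxy
    have hv : (backFun σ c hc x).1 = (backFun σ c hc y).1 := congrArg Fin.val hxy
    by_cases hx : x.1 = 0 <;> by_cases hy : y.1 = 0
    · exact Fin.ext (by omega)
    · exfalso
      have h1 := backFun_zero σ c hc x hx
      have h2 := backFun_succ σ c hc y hy ⟨y.1-1, by omega⟩ rfl
      omega
    · exfalso
      have h1 := backFun_zero σ c hc y hy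
      have h2 := backFun_succ σ c hc x hx ⟨x.1-1, by omega⟩ rfl
      omega
    · have h1 := backFun_succ σ c hc x hx ⟨x.1-1, by omega⟩ rfl
      have h2 := backFun_succ σ c hc y hy ⟨y.1-1, by omega⟩ rfl
      have hval : (σ ⟨x.1-1, by omega⟩).1 = (σ ⟨y.1-1, by omega⟩).1 := by omega
      have := σ.injective (Fin.ext hval)
      simp only [Fin.mk.injEq] at this
      exact Fin.ext (by omega)))

lemma back_zero (σ : Equiv.Perm (Fin m)) (c : ℕ) (hc : c ≤ m) (k : Fin (m+1)) (hk : k.1 = 0) :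
    ((back σ c hc) k).1 = c := backFun_zero σ c hc k hk

lemma back_succ (σ : Equiv.Perm (Fin m)) (c : ℕ) (hc : c ≤ m) (k : Fin (m+1))
    (hk : k.1 ≠ 0) (j : Fin m) (hj : j.1 = k.1 - 1) :
    ((σ j).1 < c ∧ ((back σ c hc) k).1 = (σ j).1) ∨
    (c ≤ (σ j).1 ∧ ((back σ c hc) k).1 = (σ j).1 + 1) := backFun_succ σ c hc k hk j hj

lemma fwd_back (σ : Equiv.Perm (Fin m)) (c : ℕ) (hc : c ≤ m)
    (h0 : ((back σ c hc) ⟨0, Nat.succ_pos m⟩).1 = c) :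
    fwd (back σ c hc) c hc h0 = σ := by
  apply Equiv.ext
  intro j
  apply Fin.ext
  have h1 := fwd_spec (back σ c hc) c hc h0 j ⟨j.1+1, by omega⟩ rfl
  have h2 := back_succ σ c hc ⟨j.1+1, by omega⟩ (by simp) j (by simp)
  omega

lemma back_fwd (π : Equiv.Perm (Fin (m+1))) (c : ℕ) (hc : c ≤ m)
    (h0 : (π ⟨0, Nat.succ_pos m⟩).1 = c) :
    back (fwd π c hc h0) c hc = π := by
  apply Equiv.ext
  intro k
  apply Fin.ext
  by_cases hk : k.1 = 0
  · have h1 := back_zero (fwd π c hc h0) c hc k hk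
    have h2 : (π k).1 = c := by
      have : k = ⟨0, Nat.succ_pos m⟩ := Fin.ext hk
      rw [this]; exact h0
    omega
  · have h1 := back_succ (fwd π c hc h0) c hc k hk ⟨k.1-1, by omega⟩ rfl
    have h2 := fwd_spec π c hc h0 ⟨k.1-1, by omega⟩ k (by simp; omega)
    have hne : (π k).1 ≠ c := by
      rw [← h0]; exact val_ne π (fun e => hk (congrArg Fin.val e))
    omega

end Std

section Transfer

lemma bad_iff (π : Equiv.Perm (Fin (m+1))) (c : ℕ) (hc : c ≤ m)
    (h0 : (π ⟨0, Nat.succ_pos m⟩).1 = c) :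
    Bad π ↔ (Bad (fwd π c hc h0) ∨ BigT (fwd π c hc h0) c) := by
  constructor
  · rintro ⟨a, b, c', d', hab, hbc, hcd, h1, h2, h3⟩
    by_cases ha : a.1 = 0
    · right
      have hπa : (π a).1 = c := by
        rw [show a = ⟨0, Nat.succ_pos m⟩ from Fin.ext ha]; exact h0
      obtain ⟨B, hB⟩ : ∃ x : Fin m, x.1 = b.1 - 1 := ⟨⟨b.1-1, by have := b.2; omega⟩, rfl⟩
      obtain ⟨C, hC⟩ : ∃ x : Fin m, x.1 = c'.1 - 1 := ⟨⟨c'.1-1, by have := c'.2; omega⟩, rfl⟩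
      obtain ⟨D, hD⟩ : ∃ x : Fin m, x.1 = d'.1 - 1 := ⟨⟨d'.1-1, by have := d'.2; omega⟩, rfl⟩
      have sb := fwd_spec π c hc h0 B b (by omega)
      have sc := fwd_spec π c hc h0 C c' (by omega)
      have sd := fwd_spec π c hc h0 D d' (by omega)
      exact ⟨B, C, D, by omega, by omega, by omega, by omega, by omega⟩
    · left
      obtain ⟨A, hA⟩ : ∃ x : Fin m, x.1 = a.1 - 1 := ⟨⟨a.1-1, by have := a.2; omega⟩, rfl⟩
      obtain ⟨B, hB⟩ : ∃ x : Fin m, x.1 = b.1 - 1 := ⟨⟨b.1-1, by have := b.2; omega⟩, rfl⟩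
      obtain ⟨C, hC⟩ : ∃ x : Fin m, x.1 = c'.1 - 1 := ⟨⟨c'.1-1, by have := c'.2; omega⟩, rfl⟩
      obtain ⟨D, hD⟩ : ∃ x : Fin m, x.1 = d'.1 - 1 := ⟨⟨d'.1-1, by have := d'.2; omega⟩, rfl⟩
      have sa := fwd_spec π c hc h0 A a (by omega)
      have sb := fwd_spec π c hc h0 B b (by omega)
      have sc := fwd_spec π c hc h0 C c' (by omega)
      have sd := fwd_spec π c hc h0 D d' (by omega)
      exact ⟨A, B, C, D, by omega, by omega, by omega, by omega, by omega, by omega⟩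
  · rintro (⟨A, B, C, D, hab, hbc, hcd, h1, h2, h3⟩ | ⟨B, C, D, hbc, hcd, h1, h2, h3⟩)
    · obtain ⟨a, hA⟩ : ∃ x : Fin (m+1), x.1 = A.1 + 1 := ⟨⟨A.1+1, by have := A.2; omega⟩, rfl⟩
      obtain ⟨b, hB⟩ : ∃ x : Fin (m+1), x.1 = B.1 + 1 := ⟨⟨B.1+1, by have := B.2; omega⟩, rfl⟩
      obtain ⟨c', hC⟩ : ∃ x : Fin (m+1), x.1 = C.1 + 1 := ⟨⟨C.1+1, by have := C.2; omega⟩, rfl⟩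
      obtain ⟨d', hD⟩ : ∃ x : Fin (m+1), x.1 = D.1 + 1 := ⟨⟨D.1+1, by have := D.2; omega⟩, rfl⟩
      have sa := fwd_spec π c hc h0 A a (by omega)
      have sb := fwd_spec π c hc h0 B b (by omega)
      have sc := fwd_spec π c hc h0 C c' (by omega)
      have sd := fwd_spec π c hc h0 D d' (by omega)
      exact ⟨a, b, c', d', by omega, by omega, by omega, by omega, by omega, by omega⟩
    · obtain ⟨b, hB⟩ : ∃ x : Fin (m+1), x.1 = B.1 + 1 := ⟨⟨B.1+1, by have := B.2; omega⟩, rfl⟩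
      obtain ⟨c', hC⟩ : ∃ x : Fin (m+1), x.1 = C.1 + 1 := ⟨⟨C.1+1, by have := C.2; omega⟩, rfl⟩
      obtain ⟨d', hD⟩ : ∃ x : Fin (m+1), x.1 = D.1 + 1 := ⟨⟨D.1+1, by have := D.2; omega⟩, rfl⟩
      have sb := fwd_spec π c hc h0 B b (by omega)
      have sc := fwd_spec π c hc h0 C c' (by omega)
      have sd := fwd_spec π c hc h0 D d' (by omega)
      obtain ⟨z, hz⟩ : ∃ x : Fin (m+1), x.1 = 0 := ⟨⟨0, Nat.succ_pos m⟩, rfl⟩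
      have hπz : (π z).1 = c := by
        rw [show z = ⟨0, Nat.succ_pos m⟩ from Fin.ext hz]; exact h0
      exact ⟨z, b, c', d', by omega, by omega, by omega, by omega, by omega, by omega⟩

lemma F_G (c : ℕ) (hc : c ≤ m) : F (m+1) (c+1) = G m c := by
  apply Nat.card_congr
  refine
    { toFun := fun p =>
        ⟨fwd p.1 c hc (by have := p.2.2 ⟨0, Nat.succ_pos m⟩ rfl; omega), ?_⟩
      invFun := fun q =>
        ⟨back q.1 c hc, ?_, ?_⟩
      left_inv := fun p => Subtype.ext (back_fwd p.1 c hc _)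
      right_inv := fun q => Subtype.ext (fwd_back q.1 c hc _) }
  · have hb := p.2.1
    rw [bad_iff p.1 c hc (by have := p.2.2 ⟨0, Nat.succ_pos m⟩ rfl; omega)] at hb
    exact not_or.mp hb
  · intro hbad
    rw [bad_iff (back q.1 c hc) c hc (back_zero q.1 c hc _ rfl)] at hbad
    rw [fwd_back q.1 c hc] at hbad
    exact (not_or.mpr q.2 : _) hbad
  · intro j hj
    rw [back_zero q.1 c hc j hj]

lemma G_top (c : ℕ) (hc : m ≤ c + 1) : G m c = T m := by
  apply Nat.card_congr
  apply Equiv.subtypeEquivRight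
  intro σ
  constructor
  · exact fun h => h.1
  · intro h
    refine ⟨h, ?_⟩
    rintro ⟨B, C, D, hbc, hcd, h1, h2, h3⟩
    have hCD : (σ C).1 ≠ (σ D).1 := val_ne σ (by intro e; rw [e] at hcd; omega)
    have := (σ C).2
    have := (σ D).2
    omega

end Transfer

section Phi

def gFun (c : ℕ) (hc : c + 2 ≤ m) : Fin m → Fin m := fun v =>
  if _ : v.1 < c then v
  else if _ : v.1 = m - 1 then ⟨c, by omega⟩
  else ⟨v.1 + 1, by have := v.2; omega⟩

lemma gFun_spec (c : ℕ) (hc : c + 2 ≤ m) (v : Fin m) :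
    (v.1 < c ∧ (gFun c hc v).1 = v.1) ∨
    (c ≤ v.1 ∧ v.1 + 1 ≤ m - 1 ∧ (gFun c hc v).1 = v.1 + 1) ∨
    (v.1 = m - 1 ∧ (gFun c hc v).1 = c) := by
  unfold gFun
  split_ifs with h1 h2
  · exact Or.inl ⟨h1, rfl⟩
  · exact Or.inr (Or.inr ⟨h2, rfl⟩)
  · exact Or.inr (Or.inl ⟨by omega, by have := v.2; omega, rfl⟩)

noncomputable def gPerm (c : ℕ) (hc : c + 2 ≤ m) : Equiv.Perm (Fin m) :=
  Equiv.ofBijective (gFun c hc) (Finite.injective_iff_bijective.mp (by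
    intro x y hxy
    have hx := gFun_spec c hc x
    have hy := gFun_spec c hc y
    rw [hxy] at hx
    exact Fin.ext (by have := x.2; have := y.2; omega)))

lemma gPerm_spec (c : ℕ) (hc : c + 2 ≤ m) (v : Fin m) :
    (v.1 < c ∧ ((gPerm c hc) v).1 = v.1) ∨
    (c ≤ v.1 ∧ v.1 + 1 ≤ m - 1 ∧ ((gPerm c hc) v).1 = v.1 + 1) ∨
    (v.1 = m - 1 ∧ ((gPerm c hc) v).1 = c) := gFun_spec c hc v

lemma gPerm_symm_spec (c : ℕ) (hc : c + 2 ≤ m) (w : Fin m) :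
    (w.1 < c ∧ ((gPerm c hc).symm w).1 = w.1) ∨
    (c < w.1 ∧ ((gPerm c hc).symm w).1 = w.1 - 1) ∨
    (w.1 = c ∧ ((gPerm c hc).symm w).1 = m - 1) := by
  have h := gPerm_spec c hc ((gPerm c hc).symm w)
  rw [Equiv.apply_symm_apply] at h
  have := ((gPerm c hc).symm w).2
  omega

/-- In the presence of ¬BigT and a large first letter, the first letter is m-1. -/
lemma first_eq_max {σ : Equiv.Perm (Fin m)} {c : ℕ} (hc : c + 2 ≤ m)
    (hbig : ¬ BigT σ c) {z : Fin m} (hz : z.1 = 0) (hfirst : c < (σ z).1) :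
    (σ z).1 = m - 1 := by
  by_contra hne
  have hb := (σ z).2
  set pc := σ.symm ⟨c, by omega⟩ with hpc
  set pd := σ.symm ⟨m - 1, by omega⟩ with hpd
  have hvc : (σ pc).1 = c := by rw [hpc, Equiv.apply_symm_apply]
  have hvd : (σ pd).1 = m - 1 := by rw [hpd, Equiv.apply_symm_apply]
  have hpcz : 0 < pc.1 := by
    rcases Nat.eq_zero_or_pos pc.1 with h | h
    · exfalso; have : pc = z := Fin.ext (by omega)
      rw [this] at hvc; omega
    · exact h
  have hpdz : 0 < pd.1 := by
    rcases Nat.eq_zero_or_pos pd.1 with h | h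
    · exfalso; have : pd = z := Fin.ext (by omega)
      rw [this] at hvd; omega
    · exact h
  have hpcd : pc.1 ≠ pd.1 := by
    intro h
    have : pc = pd := Fin.ext h
    rw [this] at hvc; omega
  apply hbig
  rcases lt_or_gt_of_ne hpcd with h | h
  · exact ⟨z, pc, pd, by omega, by omega, by omega, by omega, by omega⟩
  · exact ⟨z, pd, pc, by omega, by omega, by omega, by omega, by omega⟩

lemma card_phi (c : ℕ) (hc : c + 2 ≤ m) :
    Nat.card {σ : Equiv.Perm (Fin m) // (¬ Bad σ ∧ ¬ BigT σ c) ∧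
      ¬ (∀ j : Fin m, j.1 = 0 → (σ j).1 + 1 ≤ c + 1)} = F m (c + 1) := by
  apply Nat.card_congr
  refine
    { toFun := fun p => ⟨p.1.trans (gPerm c hc), ?_, ?_⟩
      invFun := fun q => ⟨q.1.trans (gPerm c hc).symm, ⟨?_, ?_⟩, ?_⟩
      left_inv := fun p => Subtype.ext (by ext x; simp)
      right_inv := fun q => Subtype.ext (by ext x; simp) }
  · -- ¬ Bad (σ.trans g)
    obtain ⟨σ, ⟨hbad, hbig⟩, hfirst⟩ := p
    show ¬ Bad (σ.trans (gPerm c hc))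
    push_neg at hfirst
    obtain ⟨z, hz, hzv⟩ := hfirst
    have hmax : (σ z).1 = m - 1 := first_eq_max hc hbig hz (by omega)
    have hnm : ∀ x : Fin m, x.1 ≠ 0 → (σ x).1 ≠ m - 1 := by
      intro x hx
      rw [← hmax]
      exact val_ne σ (by intro e; rw [e] at hx; omega)
    rintro ⟨a, b, c', d', hab, hbc, hcd, h1, h2, h3⟩
    have ta : ((σ.trans (gPerm c hc)) a).1 = ((gPerm c hc) (σ a)).1 := rfl
    have tb : ((σ.trans (gPerm c hc)) b).1 = ((gPerm c hc) (σ b)).1 := rfl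
    have tc : ((σ.trans (gPerm c hc)) c').1 = ((gPerm c hc) (σ c')).1 := rfl
    have td : ((σ.trans (gPerm c hc)) d').1 = ((gPerm c hc) (σ d')).1 := rfl
    have sb := gPerm_spec c hc (σ b)
    have sc := gPerm_spec c hc (σ c')
    have sd := gPerm_spec c hc (σ d')
    have hb := hnm b (by omega)
    have hcn := hnm c' (by omega)
    have hdn := hnm d' (by omega)
    by_cases ha : a.1 = 0
    · have haz : a = z := Fin.ext (by omega)
      have hvaz : (σ a).1 = (σ z).1 := by rw [haz]
      have hva : ((gPerm c hc) (σ a)).1 = c := by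
        rcases gPerm_spec c hc (σ a) with h | h | h <;> omega
      exact hbig ⟨b, c', d', by omega, by omega, by omega, by omega, by omega⟩
    · have sa := gPerm_spec c hc (σ a)
      have han := hnm a ha
      exact hbad ⟨a, b, c', d', by omega, by omega, by omega, by omega, by omega, by omega⟩
  · -- first letter of σ.trans g is c+1
    obtain ⟨σ, ⟨hbad, hbig⟩, hfirst⟩ := p
    show ∀ j : Fin m, j.1 = 0 → ((σ.trans (gPerm c hc)) j).1 + 1 = c + 1
    push_neg at hfirst
    obtain ⟨z, hz, hzv⟩ := hfirst
    have hmax : (σ z).1 = m - 1 := first_eq_max hc hbig hz (by omega)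
    intro j hj
    have hjz : j = z := Fin.ext (by omega)
    have hvjz : (σ j).1 = (σ z).1 := by rw [hjz]
    have : ((σ.trans (gPerm c hc)) j).1 = ((gPerm c hc) (σ j)).1 := rfl
    rcases gPerm_spec c hc (σ j) with h | h | h <;> omega
  · -- ¬ Bad (τ.trans g.symm)
    obtain ⟨τ, hbad, hfirst⟩ := q
    have hm1 : 0 < m := by omega
    have hz : (τ ⟨0, hm1⟩).1 = c := by have := hfirst ⟨0, hm1⟩ rfl; omega
    have hnc : ∀ x : Fin m, x.1 ≠ 0 → (τ x).1 ≠ c := by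
      intro x hx
      rw [← hz]
      exact val_ne τ (by intro e; rw [e] at hx; simp at hx)
    show ¬ Bad (τ.trans (gPerm c hc).symm)
    rintro ⟨a, b, c', d', hab, hbc, hcd, h1, h2, h3⟩
    have ta : ((τ.trans (gPerm c hc).symm) a).1 = ((gPerm c hc).symm (τ a)).1 := rfl
    have tb : ((τ.trans (gPerm c hc).symm) b).1 = ((gPerm c hc).symm (τ b)).1 := rfl
    have tc : ((τ.trans (gPerm c hc).symm) c').1 = ((gPerm c hc).symm (τ c')).1 := rfl
    have td : ((τ.trans (gPerm c hc).symm) d').1 = ((gPerm c hc).symm (τ d')).1 := rfl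
    have sb := gPerm_symm_spec c hc (τ b)
    have sc := gPerm_symm_spec c hc (τ c')
    have sd := gPerm_symm_spec c hc (τ d')
    have h00 : (⟨0, hm1⟩ : Fin m).1 = 0 := rfl
    by_cases ha : a.1 = 0
    · have haz : ((gPerm c hc).symm (τ a)).1 = m - 1 := by
        have h' : a = ⟨0, hm1⟩ := Fin.ext ha
        have hva : (τ a).1 = (τ ⟨0, hm1⟩).1 := by rw [h']
        rcases gPerm_symm_spec c hc (τ a) with h | h | h <;> omega
      have := ((τ.trans (gPerm c hc).symm) c').2
      omega
    · have sa := gPerm_symm_spec c hc (τ a)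
      have han := hnc a ha
      have hbn := hnc b (by omega)
      have hcn := hnc c' (by omega)
      have hdn := hnc d' (by omega)
      exact hbad ⟨a, b, c', d', by omega, by omega, by omega, by omega, by omega, by omega⟩
  · -- ¬ BigT (τ.trans g.symm) c
    obtain ⟨τ, hbad, hfirst⟩ := q
    have hm1 : 0 < m := by omega
    have hz : (τ ⟨0, hm1⟩).1 = c := by have := hfirst ⟨0, hm1⟩ rfl; omega
    have hnc : ∀ x : Fin m, x.1 ≠ 0 → (τ x).1 ≠ c := by
      intro x hx
      rw [← hz]
      exact val_ne τ (by intro e; rw [e] at hx; simp at hx)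
    show ¬ BigT (τ.trans (gPerm c hc).symm) c
    rintro ⟨b, c', d', hbc, hcd, h1, h2, h3⟩
    have tb : ((τ.trans (gPerm c hc).symm) b).1 = ((gPerm c hc).symm (τ b)).1 := rfl
    have tc : ((τ.trans (gPerm c hc).symm) c').1 = ((gPerm c hc).symm (τ c')).1 := rfl
    have td : ((τ.trans (gPerm c hc).symm) d').1 = ((gPerm c hc).symm (τ d')).1 := rfl
    have sc := gPerm_symm_spec c hc (τ c')
    have sd := gPerm_symm_spec c hc (τ d')
    by_cases hb : b.1 = 0
    · have hbz : ((gPerm c hc).symm (τ b)).1 = m - 1 := by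
        have h' : b = ⟨0, hm1⟩ := Fin.ext hb
        have hvb : (τ b).1 = (τ ⟨0, hm1⟩).1 := by rw [h']
        rcases gPerm_symm_spec c hc (τ b) with h | h | h <;> omega
      have := ((τ.trans (gPerm c hc).symm) c').2
      have := ((τ.trans (gPerm c hc).symm) d').2
      omega
    · have sb := gPerm_symm_spec c hc (τ b)
      have hbn := hnc b hb
      have hcn := hnc c' (by omega)
      have hdn := hnc d' (by omega)
      have h00 : (⟨0, hm1⟩ : Fin m).1 = 0 := rfl
      exact hbad ⟨⟨0, hm1⟩, b, c', d', by omega, by omega, by omega, by omega, by omega, by omega⟩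
  · -- first letter of τ.trans g.symm is > c + 1
    obtain ⟨τ, hbad, hfirst⟩ := q
    have hm1 : 0 < m := by omega
    have hz : (τ ⟨0, hm1⟩).1 = c := by have := hfirst ⟨0, hm1⟩ rfl; omega
    show ¬ (∀ j : Fin m, j.1 = 0 → ((τ.trans (gPerm c hc).symm) j).1 + 1 ≤ c + 1)
    intro hall
    have h := hall ⟨0, hm1⟩ rfl
    have t0 : ((τ.trans (gPerm c hc).symm) ⟨0, hm1⟩).1 = ((gPerm c hc).symm (τ ⟨0, hm1⟩)).1 := rfl
    rcases gPerm_symm_spec c hc (τ ⟨0, hm1⟩) with hh | hh | hh <;> omega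

end Phi

section Counting

lemma card_split {α : Type*} [Fintype α] (P Q : α → Prop) :
    Nat.card {x // P x} = Nat.card {x // P x ∧ Q x} + Nat.card {x // P x ∧ ¬ Q x} := by
  classical
  rw [Nat.card_eq_fintype_card, Nat.card_eq_fintype_card, Nat.card_eq_fintype_card,
    Fintype.card_subtype, Fintype.card_subtype, Fintype.card_subtype]
  have key := Finset.card_filter_add_card_filter_not
    (s := Finset.univ.filter P) (p := Q)
  rw [Finset.filter_filter, Finset.filter_filter] at key
  convert key.symm using 3

lemma bigT_of_small_first {σ : Equiv.Perm (Fin m)} {c : ℕ} (hm : 0 < m)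
    (hbad : ¬ Bad σ) (hfirst : ∀ j : Fin m, j.1 = 0 → (σ j).1 + 1 ≤ c + 1) :
    ¬ BigT σ c := by
  rintro ⟨b, c', d', hbc, hcd, h1, h2, h3⟩
  have h00 : (⟨0, hm⟩ : Fin m).1 = 0 := rfl
  have hz : (σ ⟨0, hm⟩).1 ≤ c := by have := hfirst ⟨0, hm⟩ rfl; omega
  have hcz : (σ c').1 ≠ (σ ⟨0, hm⟩).1 := val_ne σ (by intro e; rw [e] at hbc; omega)
  have hdz : (σ d').1 ≠ (σ ⟨0, hm⟩).1 := val_ne σ (by intro e; rw [e] at hcd; omega)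
  have hb0 : 0 < b.1 := by
    rcases Nat.eq_zero_or_pos b.1 with h | h
    · exfalso
      have hbz : b = ⟨0, hm⟩ := Fin.ext (by omega)
      rw [hbz] at h3
      omega
    · exact h
  exact hbad ⟨⟨0, hm⟩, b, c', d', by omega, by omega, by omega, by omega, by omega, by omega⟩

lemma G_split (c : ℕ) (hc : c + 2 ≤ m) : G m c = Pl m (c + 1) + F m (c + 1) := by
  have hm : 0 < m := by omega
  rw [show G m c = Nat.card {σ : Equiv.Perm (Fin m) // (¬ Bad σ ∧ ¬ BigT σ c)} from rfl,
    card_split (fun σ => ¬ Bad σ ∧ ¬ BigT σ c)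
      (fun σ => ∀ j : Fin m, j.1 = 0 → (σ j).1 + 1 ≤ c + 1)]
  congr 1
  · apply Nat.card_congr
    apply Equiv.subtypeEquivRight
    intro σ
    constructor
    · rintro ⟨⟨hb, _⟩, hf⟩; exact ⟨hb, hf⟩
    · rintro ⟨hb, hf⟩; exact ⟨⟨hb, bigT_of_small_first hm hb hf⟩, hf⟩
  · exact card_phi c hc

lemma card_subtype_filter {α : Type*} [Fintype α] (p : α → Prop) [DecidablePred p] :
    Nat.card {x // p x} = (Finset.univ.filter p).card := by
  rw [Nat.card_eq_fintype_card]
  exact Fintype.card_subtype p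

lemma T_sum (hm : 0 < m) : T m = ∑ j ∈ Finset.Icc 1 m, F m j := by
  classical
  rw [T, card_subtype_filter]
  rw [Finset.card_eq_sum_card_fiberwise (f := fun σ : Equiv.Perm (Fin m) => (σ ⟨0, hm⟩).1 + 1)
    (t := Finset.Icc 1 m) (fun σ _ => by
      have := (σ ⟨0, hm⟩).2
      simp only [Finset.mem_coe, Finset.mem_Icc]
      omega)]
  apply Finset.sum_congr rfl
  intro j _
  rw [F, card_subtype_filter, Finset.filter_filter]
  apply Finset.card_nbij id (fun σ hσ => by
      simp only [Finset.mem_coe, Finset.mem_filter] at *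
      refine ⟨hσ.1, hσ.2.1, ?_⟩
      intro j' hj'
      have : j' = ⟨0, hm⟩ := Fin.ext hj'
      rw [this]
      exact hσ.2.2)
    (fun x _ y _ h => h)
    (by
      intro σ hσ
      simp only [Finset.coe_filter, Set.mem_setOf_eq, Set.mem_image] at *
      exact ⟨σ, ⟨hσ.1, hσ.2.1, hσ.2.2 ⟨0, hm⟩ rfl⟩, rfl⟩)

lemma Pl_sum (hm : 0 < m) (k : ℕ) (hk : k ≤ m) : Pl m k = ∑ j ∈ Finset.Icc 1 k, F m j := by
  classical
  rw [Pl, card_subtype_filter]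
  rw [Finset.card_eq_sum_card_fiberwise (f := fun σ : Equiv.Perm (Fin m) => (σ ⟨0, hm⟩).1 + 1)
    (t := Finset.Icc 1 k) (fun σ hσ => by
      simp only [Finset.mem_coe, Finset.mem_filter] at hσ
      have := hσ.2.2 ⟨0, hm⟩ rfl
      simp only [Finset.mem_coe, Finset.mem_Icc]
      omega)]
  apply Finset.sum_congr rfl
  intro j hj
  simp only [Finset.mem_Icc] at hj
  rw [F, card_subtype_filter, Finset.filter_filter]
  apply Finset.card_nbij id (fun σ hσ => by
      simp only [Finset.mem_coe, Finset.mem_filter] at *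
      refine ⟨hσ.1, hσ.2.1.1, ?_⟩
      intro j' hj'
      have : j' = ⟨0, hm⟩ := Fin.ext hj'
      rw [this]
      exact hσ.2.2)
    (fun x _ y _ h => h)
    (by
      intro σ hσ
      simp only [Finset.coe_filter, Set.mem_setOf_eq, Set.mem_image] at *
      refine ⟨σ, ⟨hσ.1, ⟨hσ.2.1, ?_⟩, hσ.2.2 ⟨0, hm⟩ rfl⟩, rfl⟩
      intro j' hj'
      have : j' = ⟨0, hm⟩ := Fin.ext hj'
      rw [this]
      have := hσ.2.2 ⟨0, hm⟩ rfl
      omega)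

lemma T_zero : T 0 = 1 := by
  rw [T]
  have : ∀ σ : Equiv.Perm (Fin 0), ¬ Bad σ := by
    rintro σ ⟨a, _, _, _, _⟩
    exact a.elim0
  rw [Nat.card_congr (Equiv.subtypeEquivRight (q := fun _ => True) (by simp [this]))]
  simp [Nat.card_eq_fintype_card]

end Counting

section Assemble

lemma FE1 (m : ℕ) : F (m+1) (m+1) = T m := (F_G m le_rfl).trans (G_top m (by omega))

lemma FE2 (m : ℕ) (hm : 1 ≤ m) : F (m+1) m = T m := by
  obtain ⟨k, rfl⟩ : ∃ k, m = k + 1 := ⟨m - 1, by omega⟩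
  exact (F_G k (by omega)).trans (G_top k (by omega))

lemma FE3 (m c : ℕ) (hc : c + 2 ≤ m) :
    F (m+1) (c+1) = (∑ j ∈ Finset.Icc 1 (c+1), F m j) + F m (c+1) := by
  rw [F_G c (by omega), G_split c hc, Pl_sum (by omega) (c+1) (by omega)]

lemma F11 : F 1 1 = 1 := by
  rw [show (1:ℕ) = 0 + 1 from rfl] at *
  rw [F_G (m := 0) 0 le_rfl, G_top 0 (by omega), T_zero]

lemma main (S : ℕ → ℕ → ℤ)
    (h11 : S 1 1 = 1) (h21 : S 2 1 = 1) (h22 : S 2 2 = 1)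
    (h0 : ∀ n, S n 0 = 0)
    (hrec : ∀ n k, 1 ≤ k → k ≤ n - 2 →
      S n k = S n (k - 1) + 2 * S (n - 1) k - S (n - 1) (k - 1))
    (htop : ∀ n, 3 ≤ n → S n n = S n (n - 2) ∧ S n (n - 1) = S n (n - 2)) :
    ∀ m i, 1 ≤ i → i ≤ m → (F m i : ℤ) = S m i := by
  intro m
  induction m using Nat.strong_induction_on with
  | _ m IH =>
    match m with
    | 0 => intro i h1 h2; omega
    | m' + 1 =>
      have inner : ∀ i, 1 ≤ i → i + 2 ≤ m' + 1 → (F (m'+1) i : ℤ) = S (m'+1) i := by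
        intro i
        induction i using Nat.strong_induction_on with
        | _ i IHi =>
          intro hi1 hi2
          obtain ⟨c, rfl⟩ : ∃ c, i = c + 1 := ⟨i - 1, by omega⟩
          have hrec' := hrec (m'+1) (c+1) (by omega) (by omega)
          have e1 : (c+1) - 1 = c := by omega
          have e2 : (m'+1) - 1 = m' := by omega
          rw [e1, e2] at hrec'
          have hF3 := FE3 m' c (by omega)
          match c with
          | 0 =>
            rw [hF3, hrec', h0]
            have hsum : ∑ j ∈ Finset.Icc 1 1, F m' j = F m' 1 := by
              rw [Finset.Icc_self, Finset.sum_singleton]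
            rw [hsum]
            have hm1 := IH m' (by omega) 1 (by omega) (by omega)
            push_cast
            rw [h0]
            linarith
          | c' + 1 =>
            rw [show c' + 1 + 1 = c' + 2 from rfl] at hF3 hrec' ⊢
            have hprev := IHi (c'+1) (by omega) (by omega) (by omega)
            have hF3' := FE3 m' c' (by omega)
            have hcur := IH m' (by omega) (c'+2) (by omega) (by omega)
            have hprevm := IH m' (by omega) (c'+1) (by omega) (by omega)
            have hsum : ∑ j ∈ Finset.Icc 1 (c'+2), F m' j
                = (∑ j ∈ Finset.Icc 1 (c'+1), F m' j) + F m' (c'+2) :=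
              Finset.sum_Icc_succ_top (by omega) _
            have hkey : F (m'+1) (c'+2) + F m' (c'+1)
                = F (m'+1) (c'+1) + 2 * F m' (c'+2) := by omega
            have hkey' := congrArg (Nat.cast : ℕ → ℤ) hkey
            push_cast at hkey'
            rw [hrec']
            linarith
      intro i hi1 hi2
      by_cases hsmall : i + 2 ≤ m' + 1
      · exact inner i hi1 hsmall
      · match m', hsmall with
        | 0, _ =>
          have : i = 1 := by omega
          subst this
          rw [F11, h11]
          norm_num
        | 1, _ =>
          have hT1 : T 1 = 1 := by
            rw [T_sum (by omega), Finset.Icc_self, Finset.sum_singleton, F11]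
          rcases (show i = 1 ∨ i = 2 by omega) with h | h <;> subst h
          · rw [FE2 1 le_rfl, hT1, h21]; norm_num
          · rw [FE1 1, hT1, h22]; norm_num
        | k + 2, _ =>
          -- m = k + 3, i = k + 2 or k + 3
          have hTsum : T (k+2) = (∑ j ∈ Finset.Icc 1 (k+1), F (k+2) j) + F (k+2) (k+2) := by
            rw [T_sum (by omega)]
            exact Finset.sum_Icc_succ_top (by omega) _
          have hTT : F (k+2) (k+2) = F (k+2) (k+1) := by
            rw [FE1 (k+1), FE2 (k+1) (by omega)]
          have hX : T (k+2) = F (k+3) (k+1) := by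
            rw [hTsum, hTT, FE3 (k+2) k (by omega)]
          have hS : (F (k+3) (k+1) : ℤ) = S (k+3) (k+1) := inner (k+1) (by omega) (by omega)
          have htop' := htop (k+3) (by omega)
          have e1 : (k+3) - 2 = k + 1 := by omega
          have e2 : (k+3) - 1 = k + 2 := by omega
          rw [e1, e2] at htop'
          rcases (show i = k + 2 ∨ i = k + 3 by omega) with h | h <;> subst h
          · rw [FE2 (k+2) (by omega), hX, hS, htop'.2]
          · rw [FE1 (k+2), hX, hS, htop'.1]

end Assemble

section Pattern

lemma contains_iff_bad {n : ℕ} (π : Equiv.Perm (Fin n)) :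
    (ContainsPat π ![1, 3, 2, 4] ∨ ContainsPat π ![1, 3, 4, 2]) ↔ Bad π := by
  constructor
  · rintro (⟨f, hf, hiff⟩ | ⟨f, hf, hiff⟩)
    · exact ⟨f 0, f 1, f 2, f 3,
        Fin.lt_def.mp (hf (by decide)), Fin.lt_def.mp (hf (by decide)),
        Fin.lt_def.mp (hf (by decide)),
        Fin.lt_def.mp ((hiff 0 2).mp (by decide)), Fin.lt_def.mp ((hiff 0 3).mp (by decide)),
        Or.inl ⟨Fin.lt_def.mp ((hiff 2 1).mp (by decide)),
                Fin.lt_def.mp ((hiff 1 3).mp (by decide))⟩⟩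
    · exact ⟨f 0, f 1, f 2, f 3,
        Fin.lt_def.mp (hf (by decide)), Fin.lt_def.mp (hf (by decide)),
        Fin.lt_def.mp (hf (by decide)),
        Fin.lt_def.mp ((hiff 0 2).mp (by decide)), Fin.lt_def.mp ((hiff 0 3).mp (by decide)),
        Or.inr ⟨Fin.lt_def.mp ((hiff 3 1).mp (by decide)),
                Fin.lt_def.mp ((hiff 1 2).mp (by decide))⟩⟩
  · rintro ⟨a, b, c, d, hab, hbc, hcd, h1, h2, h3⟩
    have hfspec : ∀ x : Fin 4,
        (x.1 = 0 ∧ (fun x : Fin 4 => if x.1 = 0 then a else if x.1 = 1 then b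
          else if x.1 = 2 then c else d) x = a) ∨
        (x.1 = 1 ∧ (fun x : Fin 4 => if x.1 = 0 then a else if x.1 = 1 then b
          else if x.1 = 2 then c else d) x = b) ∨
        (x.1 = 2 ∧ (fun x : Fin 4 => if x.1 = 0 then a else if x.1 = 1 then b
          else if x.1 = 2 then c else d) x = c) ∨
        (x.1 = 3 ∧ (fun x : Fin 4 => if x.1 = 0 then a else if x.1 = 1 then b
          else if x.1 = 2 then c else d) x = d) := by
      intro x
      have hx4 := x.2
      simp only
      split_ifs with w1 w2 w3
      · exact Or.inl ⟨w1, rfl⟩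
      · exact Or.inr (Or.inl ⟨w2, rfl⟩)
      · exact Or.inr (Or.inr (Or.inl ⟨w3, rfl⟩))
      · exact Or.inr (Or.inr (Or.inr ⟨by omega, rfl⟩))
    have hmono : StrictMono (fun x : Fin 4 => if x.1 = 0 then a else if x.1 = 1 then b
          else if x.1 = 2 then c else d) := by
      intro x y hxy
      have hxy' : x.1 < y.1 := hxy
      rw [Fin.lt_def]
      rcases hfspec x with ⟨hx, ex⟩ | ⟨hx, ex⟩ | ⟨hx, ex⟩ | ⟨hx, ex⟩ <;>
        rcases hfspec y with ⟨hy, ey⟩ | ⟨hy, ey⟩ | ⟨hy, ey⟩ | ⟨hy, ey⟩ <;>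
        rw [ex, ey] <;> omega
    rcases h3 with ⟨h3a, h3b⟩ | ⟨h3a, h3b⟩
    · refine Or.inl ⟨_, hmono, ?_⟩
      have hpspec : ∀ x : Fin 4,
          (x.1 = 0 ∧ (![1, 3, 2, 4] : Fin 4 → ℕ) x = 1) ∨
          (x.1 = 1 ∧ (![1, 3, 2, 4] : Fin 4 → ℕ) x = 3) ∨
          (x.1 = 2 ∧ (![1, 3, 2, 4] : Fin 4 → ℕ) x = 2) ∨
          (x.1 = 3 ∧ (![1, 3, 2, 4] : Fin 4 → ℕ) x = 4) := by decide
      intro x y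
      have hπab : (π a).1 ≠ (π b).1 := val_ne π (fun e => by rw [e] at hab; omega)
      have hπac : (π a).1 ≠ (π c).1 := val_ne π (fun e => by rw [e] at hab; omega)
      have hπad : (π a).1 ≠ (π d).1 := val_ne π (fun e => by rw [e] at hab; omega)
      simp only [Fin.lt_def]
      rcases hpspec x with ⟨hx, px⟩ | ⟨hx, px⟩ | ⟨hx, px⟩ | ⟨hx, px⟩ <;>
        rcases hpspec y with ⟨hy, py⟩ | ⟨hy, py⟩ | ⟨hy, py⟩ | ⟨hy, py⟩ <;>
        rcases hfspec x with ⟨hx2, ex⟩ | ⟨hx2, ex⟩ | ⟨hx2, ex⟩ | ⟨hx2, ex⟩ <;>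
        rcases hfspec y with ⟨hy2, ey⟩ | ⟨hy2, ey⟩ | ⟨hy2, ey⟩ | ⟨hy2, ey⟩ <;>
        first
          | omega
          | (beta_reduce at ex ey; rw [px, py, ex, ey]; omega)
    · refine Or.inr ⟨_, hmono, ?_⟩
      have hpspec : ∀ x : Fin 4,
          (x.1 = 0 ∧ (![1, 3, 4, 2] : Fin 4 → ℕ) x = 1) ∨
          (x.1 = 1 ∧ (![1, 3, 4, 2] : Fin 4 → ℕ) x = 3) ∨
          (x.1 = 2 ∧ (![1, 3, 4, 2] : Fin 4 → ℕ) x = 4) ∨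
          (x.1 = 3 ∧ (![1, 3, 4, 2] : Fin 4 → ℕ) x = 2) := by decide
      intro x y
      simp only [Fin.lt_def]
      rcases hpspec x with ⟨hx, px⟩ | ⟨hx, px⟩ | ⟨hx, px⟩ | ⟨hx, px⟩ <;>
        rcases hpspec y with ⟨hy, py⟩ | ⟨hy, py⟩ | ⟨hy, py⟩ | ⟨hy, py⟩ <;>
        rcases hfspec x with ⟨hx2, ex⟩ | ⟨hx2, ex⟩ | ⟨hx2, ex⟩ | ⟨hx2, ex⟩ <;>
        rcases hfspec y with ⟨hy2, ey⟩ | ⟨hy2, ey⟩ | ⟨hy2, ey⟩ | ⟨hy2, ey⟩ <;>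
        first
          | omega
          | (beta_reduce at ex ey; rw [px, py, ex, ey]; omega)

lemma card_eq_F (n i : ℕ) :
    Nat.card {π : Equiv.Perm (Fin n) //
      ¬ ContainsPat π ![1, 3, 2, 4] ∧ ¬ ContainsPat π ![1, 3, 4, 2] ∧ FirstIs π i} = F n i := by
  apply Nat.card_congr
  apply Equiv.subtypeEquivRight
  intro π
  constructor
  · rintro ⟨hp1, hp2, hfi⟩
    refine ⟨fun hb => ?_, hfi⟩
    rcases (contains_iff_bad π).mpr hb with h | h
    · exact hp1 h
    · exact hp2 h
  · rintro ⟨hb, hf⟩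
    exact ⟨fun h => hb ((contains_iff_bad π).mp (Or.inl h)),
           fun h => hb ((contains_iff_bad π).mp (Or.inr h)), hf⟩

end Pattern

end SchAux

/-- The number of permutations of `[n]` avoiding the two patterns and starting with `i`
equals the Schröder triangle entry `S_{n,i}`. -/
theorem stmt_5 (S : ℕ → ℕ → ℤ)
    (h11 : S 1 1 = 1) (h21 : S 2 1 = 1) (h22 : S 2 2 = 1)
    (h0 : ∀ n, S n 0 = 0)
    (hrec : ∀ n k, 1 ≤ k → k ≤ n - 2 →
      S n k = S n (k - 1) + 2 * S (n - 1) k - S (n - 1) (k - 1))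
    (htop : ∀ n, 3 ≤ n → S n n = S n (n - 2) ∧ S n (n - 1) = S n (n - 2)) :
    ∀ n i, 1 ≤ n → 1 ≤ i → i ≤ n →
      (Nat.card {π : Equiv.Perm (Fin n) //
        ¬ ContainsPat π ![1, 3, 2, 4] ∧ ¬ ContainsPat π ![1, 3, 4, 2] ∧ FirstIs π i} : ℤ) = S n i := by
  intro n i hn h1 h2
  rw [SchAux.card_eq_F n i]
  exact SchAux.main S h11 h21 h22 h0 hrec htop n i h1 h2
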